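/- For any g, h, k ∈ G and any c′, c″, c‴ ∈ 𝒞, the following associativity identity holds in 𝒞: m_{gh,k}(m_{g,h}(c′⊗c″) ⊗ c‴) = m_{g,hk}(c′ ⊗ m_{h,k}(c″⊗c‴)), i.e. Σ_{i,j} ξ′ⱼ ξ′ᵢ c′ g(ξ″ᵢ c″) c_{g,h} (gh)(ξ″ⱼ c‴) c_{gh,k} = Σ_{n,m} ξ′ₙ c′ g(ξ″ₙ ξ′ₘ c″ h(ξ″ₘ c‴) c_{h,k}) c_{g,hk}. In particular, the induced multiplication on HH₀(𝒞) is associative. -/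
import Mathlib


open scoped TensorProduct

noncomputable section

variable {K : Type*} [Field K] {G : Type*} [Group G]
  {A : Type*} [Ring A] [Algebra K A] {ι : Type*} [Fintype ι]

/-- The subspace `𝒞_h = span{c₁c₂ − c₂·h(c₁) | c₁, c₂ ∈ 𝒞}`. -/
def commSub (ρ : G → A ≃ₐ[K] A) (h : G) : Submodule K A :=
  Submodule.span K {x | ∃ c₁ c₂ : A, x = c₁ * c₂ - c₂ * ρ h c₁}

/-- The map `T_h(g)(c) = c_e⁻¹ c_{g,g⁻¹}⁻¹ g(c) c_{g,h} c_{gh,g⁻¹}`. -/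
def Tmap (ρ : G → A ≃ₐ[K] A) (u : G → G → Aˣ) (ue : Aˣ) (g h : G) (x : A) : A :=
  (↑(ue⁻¹) : A) * (↑((u g g⁻¹)⁻¹) : A) * ρ g x * (↑(u g h) : A) * (↑(u (g * h) g⁻¹) : A)

/-- The twisted multiplication `m_{g,h}(c′⊗c″) = Σᵢ ξ′ᵢ c′ g(ξ″ᵢ c″) c_{g,h}`. -/
def mMul (ρ : G → A ≃ₐ[K] A) (u : G → G → Aˣ) (ξ₁ ξ₂ : ι → A) (g h : G)
    (c' c'' : A) : A :=
  ∑ i, ξ₁ i * c' * ρ g (ξ₂ i * c'') * (↑(u g h) : A)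

/-- The twisted comultiplication `Δ_{g,h}(c) = Σᵢ c c_{g,h}⁻¹ g(ξ′ᵢ) ⊗ ξ″ᵢ`. -/
def ΔCom (ρ : G → A ≃ₐ[K] A) (u : G → G → Aˣ) (ξ₁ ξ₂ : ι → A) (g h : G)
    (c : A) : A ⊗[K] A :=
  ∑ i, (c * (↑((u g h)⁻¹) : A) * ρ g (ξ₁ i)) ⊗ₜ[K] ξ₂ i

/-- The subspace `𝒞_g ⊗ 𝒞` of `𝒞 ⊗ 𝒞`. -/
def leftTensor (ρ : G → A ≃ₐ[K] A) (g : G) : Submodule K (A ⊗[K] A) :=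
  Submodule.span K {z | ∃ x ∈ commSub ρ g, ∃ y : A, z = x ⊗ₜ[K] y}

/-- The subspace `𝒞 ⊗ 𝒞_h` of `𝒞 ⊗ 𝒞`. -/
def rightTensor (ρ : G → A ≃ₐ[K] A) (h : G) : Submodule K (A ⊗[K] A) :=
  Submodule.span K {z | ∃ x : A, ∃ y ∈ commSub ρ h, z = x ⊗ₜ[K] y}

section auxslide
variable {K : Type*} [Field K] {A : Type*} [Ring A] [Algebra K A] {ι : Type*} [Fintype ι]

/-- Dual expansion derived from symmetry of the Casimir tensor. -/
lemma xi_expand' (θ : A →ₗ[K] K) (ξ₁ ξ₂ : ι → A)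
    (hξ : ∀ a : A, a = ∑ i, θ (a * ξ₂ i) • ξ₁ i)
    (hξsym : (∑ i, ξ₁ i ⊗ₜ[K] ξ₂ i) = ∑ i, ξ₂ i ⊗ₜ[K] ξ₁ i)
    (a : A) : a = ∑ i, θ (a * ξ₁ i) • ξ₂ i := by
  let B : A →ₗ[K] A →ₗ[K] A := LinearMap.mk₂ K (fun x y => θ (a * x) • y)
    (fun x x' y => by simp [mul_add, add_smul])
    (fun c x y => by simp [mul_smul_comm, smul_smul])
    (fun x y y' => by simp [smul_add])
    (fun c x y => by simp [smul_smul, mul_comm])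
  have := congrArg (TensorProduct.lift B) hξsym
  simp only [map_sum, TensorProduct.lift.tmul, LinearMap.mk₂_apply, B] at this
  rw [this]; exact hξ a

/-- The sliding lemma for the Casimir element. -/
lemma slide (θ : A →ₗ[K] K)
    (htr : ∀ a b : A, θ (a * b) = θ (b * a))
    (ξ₁ ξ₂ : ι → A)
    (hξ : ∀ a : A, a = ∑ i, θ (a * ξ₂ i) • ξ₁ i)
    (hξsym : (∑ i, ξ₁ i ⊗ₜ[K] ξ₂ i) = ∑ i, ξ₂ i ⊗ₜ[K] ξ₁ i)
    (φ : A →ₐ[K] A) (z a w : A) :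
    ∑ i, z * ξ₁ i * a * φ (ξ₂ i) * w = ∑ i, ξ₁ i * a * φ (ξ₂ i * z) * w := by
  have hξ' := xi_expand' θ ξ₁ ξ₂ hξ hξsym
  calc ∑ i, z * ξ₁ i * a * φ (ξ₂ i) * w
      = ∑ i, ∑ j, θ (z * ξ₁ i * ξ₂ j) • (ξ₁ j * a * φ (ξ₂ i) * w) := by
        refine Finset.sum_congr rfl fun i _ => ?_
        conv_lhs => rw [hξ (z * ξ₁ i)]
        simp [Finset.sum_mul, smul_mul_assoc]
    _ = ∑ i, ∑ j, θ (ξ₂ j * z * ξ₁ i) • (ξ₁ j * a * φ (ξ₂ i) * w) := by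
        refine Finset.sum_congr rfl fun i _ => Finset.sum_congr rfl fun j _ => ?_
        rw [mul_assoc (ξ₂ j), ← htr (z * ξ₁ i) (ξ₂ j)]
    _ = ∑ i, ∑ j, θ (ξ₂ i * z * ξ₁ j) • (ξ₁ i * a * φ (ξ₂ j) * w) := Finset.sum_comm
    _ = ∑ i, ξ₁ i * a * φ (ξ₂ i * z) * w := by
        refine Finset.sum_congr rfl fun i _ => ?_
        conv_rhs => rw [hξ' (ξ₂ i * z)]
        rw [map_sum]
        simp [Finset.mul_sum, Finset.sum_mul, mul_smul_comm, smul_mul_assoc, mul_assoc]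

end auxslide

theorem mMul_assoc
    [Fintype G] (ρ : G → A ≃ₐ[K] A) (u : G → G → Aˣ) (ue : Aˣ)
    (hAd : ∀ (g h : G) (x : A),
      ρ g (ρ h x) = (↑(u g h) : A) * ρ (g * h) x * (↑((u g h)⁻¹) : A))
    (hAde : ∀ x : A, ρ (1 : G) x = (↑ue : A) * x * (↑(ue⁻¹) : A))
    (hcoc : ∀ g h k : G,
      (↑(u g h) : A) * (↑(u (g * h) k) : A) = ρ g (↑(u h k) : A) * (↑(u g (h * k)) : A))
    (hue1 : ∀ g : G, (↑(u g 1) : A) = ρ g (↑ue : A))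
    (hue2 : ∀ g : G, (↑(u 1 g) : A) = (↑ue : A))
    [FiniteDimensional K A] (θ : A →ₗ[K] K)
    (htr : ∀ a b : A, θ (a * b) = θ (b * a))
    (hnd : ∀ a : A, (∀ b : A, θ (a * b) = 0) → a = 0)
    (hGinv : ∀ (g : G) (a : A), θ (ρ g a) = θ a)
    (ξ₁ ξ₂ : ι → A)
    (hξ : ∀ a : A, a = ∑ i, θ (a * ξ₂ i) • ξ₁ i)
    (hξsym : (∑ i, ξ₁ i ⊗ₜ[K] ξ₂ i) = ∑ i, ξ₂ i ⊗ₜ[K] ξ₁ i)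
    (g h k : G) (c' c'' c''' : A) :
    mMul ρ u ξ₁ ξ₂ (g * h) k (mMul ρ u ξ₁ ξ₂ g h c' c'') c''' =
      mMul ρ u ξ₁ ξ₂ g (h * k) c' (mMul ρ u ξ₁ ξ₂ h k c'' c''') := by
  unfold mMul
  calc
    ∑ j, ξ₁ j * (∑ i, ξ₁ i * c' * ρ g (ξ₂ i * c'') * (↑(u g h) : A)) *
        ρ (g * h) (ξ₂ j * c''') * (↑(u (g * h) k) : A)
      = ∑ j, ∑ i, ξ₁ j * ξ₁ i * c' * ρ g (ξ₂ i) *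
          (ρ g c'' * (↑(u g h) : A) * ρ (g * h) (ξ₂ j) * ρ (g * h) c''' *
            (↑(u (g * h) k) : A)) := by
        refine Finset.sum_congr rfl fun j _ => ?_
        simp [Finset.sum_mul, Finset.mul_sum, map_mul, mul_assoc]
    _ = ∑ j, ∑ i, ξ₁ i * c' * ρ g (ξ₂ i * ξ₁ j) *
          (ρ g c'' * (↑(u g h) : A) * ρ (g * h) (ξ₂ j) * ρ (g * h) c''' *
            (↑(u (g * h) k) : A)) := by
        refine Finset.sum_congr rfl fun j _ => ?_
        exact slide θ htr ξ₁ ξ₂ hξ hξsym ((ρ g : A ≃ₐ[K] A) : A →ₐ[K] A) (ξ₁ j) c' _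
    _ = ∑ i, ∑ j, ξ₁ i * c' * ρ g (ξ₂ i * ξ₁ j) *
          (ρ g c'' * (↑(u g h) : A) * ρ (g * h) (ξ₂ j) * ρ (g * h) c''' *
            (↑(u (g * h) k) : A)) := Finset.sum_comm
    _ = ∑ i, ξ₁ i * c' *
          ρ g (ξ₂ i * (∑ j, ξ₁ j * c'' * ρ h (ξ₂ j * c''') * (↑(u h k) : A))) *
          (↑(u g (h * k)) : A) := by
        refine Finset.sum_congr rfl fun i _ => ?_
        simp only [Finset.mul_sum, Finset.sum_mul, map_sum, map_mul]
        refine Finset.sum_congr rfl fun j _ => ?_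
        simp only [hAd, mul_assoc, Units.inv_mul_cancel_left, ← hcoc]
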